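/- Let C ∈ ℝ with C ≠ 0, let α be an integer with α ≤ 1, let D ∈ ℂ with D ≠ 0, let β′ < β < α, let M ≥ 0, R > 0, and let r : (R, ∞) × ℝ → ℂ satisfy |r(ρ, θ)| ≤ M ρ^{β′} for all ρ > R and θ ∈ ℝ. Suppose for all ρ > R and all θ ∈ ℝ: Im(C ρ^α e^{iαθ} + D ρ^β e^{iβθ}) + Im r(ρ, θ) ≤ ρ |sin θ|. Then β is an integer and Im D ≤ 0. (This fixes the next-to-leading term of a covariantly stable isotropic dispersion relation ω = C k^α + D k^β + O(|k|^{β′}) with real leading coefficient.) -/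

import Mathlib

open Complex Filter Real Topology

/-- The next-to-leading term of a covariantly stable isotropic dispersion
relation `ω = C k^α + D k^β + O(|k|^{β'})` with real nonzero leading coefficient `C`,
integer `α ≤ 1`, `D ≠ 0` and `β' < β < α`: if
`Im(C ρ^α e^{iαθ} + D ρ^β e^{iβθ}) + Im r(ρ,θ) ≤ ρ |sin θ|` for all `ρ > R`, `θ ∈ ℝ`, then
`β` is an integer and `Im D ≤ 0`. -/
theorem stable_isotropic_next_to_leading_term (C : ℝ) (hC : C ≠ 0)
    (α : ℤ) (hα : α ≤ 1) (D : ℂ) (hD : D ≠ 0)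
    (β β' : ℝ) (hβ' : β' < β) (hβα : β < (α : ℝ))
    (M R : ℝ) (hM : 0 ≤ M) (hR : 0 < R)
    (r : ℝ → ℝ → ℂ)
    (hr : ∀ ρ θ : ℝ, R < ρ → ‖r ρ θ‖ ≤ M * ρ ^ β')
    (h : ∀ ρ θ : ℝ, R < ρ →
      ((C : ℂ) * ((ρ ^ (α : ℝ) : ℝ) : ℂ) * Complex.exp (Complex.I * (α : ℝ) * θ) +
          D * ((ρ ^ β : ℝ) : ℂ) * Complex.exp (Complex.I * β * θ)).im + (r ρ θ).im ≤
        ρ * |Real.sin θ|) :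
    (∃ m : ℤ, β = m) ∧ D.im ≤ 0 := by
  -- Step 1: the key inequality at θ = n π
  have key : ∀ n : ℤ, (D * Complex.exp (((π * β * n : ℝ) : ℂ) * Complex.I)).im ≤ 0 := by
    intro n
    set E : ℂ := Complex.exp (((π * β * n : ℝ) : ℂ) * Complex.I) with hE
    have hbound : ∀ ρ : ℝ, R < ρ → (D * E).im ≤ M * ρ ^ (β' - β) := by
      intro ρ hρ
      have hρ0 : (0 : ℝ) < ρ := hR.trans hρ
      have h2 := h ρ ((n : ℝ) * π) hρ
      rw [Real.sin_int_mul_pi, abs_zero, mul_zero] at h2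
      have harg1 : Complex.I * (((α : ℤ) : ℝ) : ℂ) * (((n : ℝ) * π : ℝ) : ℂ)
          = ((α * n : ℤ) : ℂ) * ((π : ℂ) * Complex.I) := by push_cast; ring
      have harg2 : Complex.I * (β : ℂ) * (((n : ℝ) * π : ℝ) : ℂ)
          = ((π * β * n : ℝ) : ℂ) * Complex.I := by push_cast; ring
      rw [harg1, harg2, Complex.exp_int_mul, Complex.exp_pi_mul_I, ← hE] at h2
      have hterm1 : (C : ℂ) * ((ρ ^ (α : ℝ) : ℝ) : ℂ) * (-1 : ℂ) ^ (α * n)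
          = ((C * ρ ^ (α : ℝ) * (-1 : ℝ) ^ (α * n) : ℝ) : ℂ) := by push_cast; ring
      have hterm2 : D * ((ρ ^ β : ℝ) : ℂ) * E = ((ρ ^ β : ℝ) : ℂ) * (D * E) := by ring
      rw [hterm1, hterm2] at h2
      simp only [Complex.add_im, Complex.ofReal_im, Complex.mul_im, Complex.ofReal_re,
        zero_mul, add_zero, zero_add] at h2
      have hrle := hr ρ ((n : ℝ) * π) hρ
      have him1 : |(r ρ ((n : ℝ) * π)).im| ≤ ‖r ρ ((n : ℝ) * π)‖ :=
        Complex.abs_im_le_norm _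
      have him2 : -|(r ρ ((n : ℝ) * π)).im| ≤ (r ρ ((n : ℝ) * π)).im := neg_abs_le _
      have hDE : (D * E).im = D.re * E.im + D.im * E.re := Complex.mul_im D E
      have hmain : ρ ^ β * (D * E).im ≤ M * ρ ^ β' := by
        rw [hDE]; linarith
      have hpow : (0 : ℝ) < ρ ^ β := Real.rpow_pos_of_pos hρ0 β
      rw [show M * ρ ^ (β' - β) = M * ρ ^ β' / ρ ^ β by
        rw [Real.rpow_sub hρ0]; ring]
      rw [le_div_iff₀ hpow]
      linarith [hmain]
    have hlim : Tendsto (fun ρ : ℝ => M * ρ ^ (β' - β)) atTop (𝓝 (M * 0)) := by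
      have : (β' - β) = -(β - β') := by ring
      rw [this]
      exact (tendsto_rpow_neg_atTop (by linarith)).const_mul M
    rw [mul_zero] at hlim
    exact ge_of_tendsto hlim ((eventually_gt_atTop R).mono fun ρ hρ => hbound ρ hρ)
  have hD_im : D.im ≤ 0 := by simpa using key 0
  refine ⟨?_, hD_im⟩
  by_contra hβZ
  push_neg at hβZ
  set f : ℝ → ℝ := fun ψ => (D * Complex.exp ((ψ : ℂ) * Complex.I)).im with hf
  have hfc : Continuous f := by fun_prop
  have hfkey : ∀ n : ℤ, f (π * β * n) ≤ 0 := fun n => key n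
  have hDpos : (0 : ℝ) < ‖D‖ := norm_pos_iff.mpr hD
  have hexp2 : Complex.exp (((π / 2 : ℝ) : ℂ) * Complex.I) = Complex.I := by
    rw [Complex.exp_mul_I, ← Complex.ofReal_cos, ← Complex.ofReal_sin,
      Real.cos_pi_div_two, Real.sin_pi_div_two]
    simp
  have hno : ¬ ∀ ψ : ℝ, f ψ ≤ 0 := by
    intro hall
    have h1 := hall (π / 2 - Complex.arg D)
    have hDrw : D * Complex.exp (((π / 2 - Complex.arg D : ℝ) : ℂ) * Complex.I)
        = (‖D‖ : ℂ) * Complex.I := by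
      rw [Complex.ofReal_sub, sub_mul, Complex.exp_sub, hexp2, ← mul_div_assoc,
        div_eq_iff (Complex.exp_ne_zero _)]
      have habs := Complex.norm_mul_exp_arg_mul_I D
      linear_combination (-Complex.I) * habs
    rw [hf] at h1
    simp only at h1
    rw [hDrw] at h1
    simp [Complex.mul_im] at h1
    exact hD h1
  rcases AddSubgroup.dense_or_cyclic (AddSubgroup.closure {π * β, 2 * π}) with hdense | ⟨a, ha⟩
  · -- dense case
    apply hno
    have hsub : (AddSubgroup.closure {π * β, 2 * π} : Set ℝ) ⊆ {x | f x ≤ 0} := by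
      intro x hx
      rw [SetLike.mem_coe, AddSubgroup.mem_closure_pair] at hx
      obtain ⟨m, k, hmk⟩ := hx
      have hfx : f x = f (π * β * m) := by
        rw [← hmk]
        simp only [hf, zsmul_eq_mul]
        congr 2
        rw [Complex.ofReal_add, add_mul, Complex.exp_add]
        rw [show (((k : ℝ) * (2 * π) : ℝ) : ℂ) * Complex.I = (k : ℂ) * (2 * π * Complex.I) by
          push_cast; ring]
        rw [Complex.exp_int_mul_two_pi_mul_I, mul_one]
        congr 1
        push_cast; ring
      exact le_of_eq_of_le hfx (hfkey m)
    have hcl : closure (AddSubgroup.closure ({π * β, 2 * π} : Set ℝ) : Set ℝ) ⊆ {x | f x ≤ 0} :=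
      closure_minimal hsub (isClosed_le hfc continuous_const)
    exact fun ψ => hcl (by rw [hdense.closure_eq]; trivial)
  · -- cyclic case
    have hπβ : π * β ∈ AddSubgroup.closure ({π * β, 2 * π} : Set ℝ) :=
      AddSubgroup.subset_closure (by simp)
    have h2π : (2 * π : ℝ) ∈ AddSubgroup.closure ({π * β, 2 * π} : Set ℝ) :=
      AddSubgroup.subset_closure (by simp)
    rw [ha, AddSubgroup.mem_closure_singleton] at hπβ h2π
    obtain ⟨m, hm⟩ := hπβ
    obtain ⟨l, hl⟩ := h2π
    have hπ0 : (π : ℝ) ≠ 0 := Real.pi_ne_zero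
    have hl0 : l ≠ 0 := by
      rintro rfl
      rw [zero_zsmul] at hl
      nlinarith [Real.pi_pos]
    have hrel : (l : ℝ) * (π * β) = (m : ℝ) * (2 * π) := by
      rw [← hm, ← hl]
      simp only [zsmul_eq_mul]
      ring
    set ζ : ℂ := Complex.exp (((π * β : ℝ) : ℂ) * Complex.I) with hζdef
    have hζl : ζ ^ l = 1 := by
      rw [hζdef, ← Complex.exp_int_mul]
      have hrelC : (l : ℂ) * ((π * β : ℝ) : ℂ) = (m : ℂ) * (2 * (π : ℂ)) := by
        exact_mod_cast congrArg (fun x : ℝ => (x : ℂ)) hrel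
      rw [show (l : ℂ) * (((π * β : ℝ) : ℂ) * Complex.I) = (m : ℂ) * (2 * (π:ℂ) * Complex.I) by
        linear_combination Complex.I * hrelC]
      exact_mod_cast Complex.exp_int_mul_two_pi_mul_I m
    have hζ2 : ζ ^ (2 : ℕ) ≠ 1 := by
      intro h2
      rw [hζdef, ← Complex.exp_nat_mul, Complex.exp_eq_one_iff] at h2
      obtain ⟨n, hn⟩ := h2
      apply hβZ n
      have h2c : ((2 * (π * β) : ℝ) : ℂ) = (((n : ℝ) * (2 * π) : ℝ) : ℂ) := by
        apply mul_right_cancel₀ Complex.I_ne_zero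
        push_cast at hn ⊢
        linear_combination hn
      have hre : (2 * (π * β) : ℝ) = (n : ℝ) * (2 * π) := by exact_mod_cast h2c
      have h2p : (2 * π : ℝ) ≠ 0 := by positivity
      have : (2 * π) * β = (2 * π) * (n : ℝ) := by linarith
      exact mul_left_cancel₀ h2p this
    have hζ1 : ζ ≠ 1 := fun h1 => hζ2 (by rw [h1]; norm_num)
    set L : ℕ := l.natAbs with hLdef
    have hL0 : L ≠ 0 := Int.natAbs_ne_zero.mpr hl0
    have hζL : ζ ^ L = 1 := by
      rcases Int.natAbs_eq l with he | he
      · rw [← zpow_natCast, ← he, hζl]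
      · rw [← zpow_natCast, show (L : ℤ) = -l by omega, zpow_neg, hζl, inv_one]
    have hL2 : 2 ≤ L := by
      by_contra hlt
      interval_cases L
      · exact hL0 rfl
      · exact hζ1 (by simpa using hζL)
    have hsum : ∑ n ∈ Finset.range L, ζ ^ n = 0 := by
      rw [geom_sum_eq hζ1, hζL]
      simp
    have hterm : ∀ n ∈ Finset.range L, (D * ζ ^ n).im ≤ 0 := by
      intro n _
      have hrw : ζ ^ n = Complex.exp (((π * β * ((n : ℤ) : ℝ) : ℝ) : ℂ) * Complex.I) := by
        rw [hζdef, ← Complex.exp_nat_mul]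
        congr 1
        push_cast
        ring
      rw [hrw]
      exact key n
    have hsum0 : ∑ n ∈ Finset.range L, (D * ζ ^ n).im = 0 := by
      rw [← Complex.im_sum, ← Finset.mul_sum, hsum, mul_zero, Complex.zero_im]
    have hall0 := (Finset.sum_eq_zero_iff_of_nonpos hterm).mp hsum0
    have h0 : (D * ζ ^ 0).im = 0 := hall0 0 (Finset.mem_range.mpr (by omega))
    have h1 : (D * ζ ^ 1).im = 0 := hall0 1 (Finset.mem_range.mpr (by omega))
    have hDim0 : D.im = 0 := by simpa using h0
    have hζim : ζ.im ≠ 0 := by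
      intro hzim
      apply hζ2
      have habs : ‖ζ‖ = 1 := Complex.norm_exp_ofReal_mul_I _
      have hnsq := Complex.sq_norm ζ
      rw [habs] at hnsq
      have hre : ζ.re ^ 2 = 1 := by
        simp [Complex.normSq_apply, hzim] at hnsq
        nlinarith
      have hzeq : ζ = (ζ.re : ℂ) := Complex.ext (by simp) (by simp [hzim])
      rw [hzeq, ← Complex.ofReal_pow, hre, Complex.ofReal_one]
    have hDre0 : D.re = 0 := by
      have hmul := Complex.mul_im D ζ
      rw [pow_one] at h1
      rw [h1, hDim0, zero_mul, add_zero] at hmul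
      exact (mul_eq_zero.mp hmul.symm).resolve_right hζim
    exact hD (Complex.ext (by simp [hDre0]) (by simp [hDim0]))
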